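/- arXiv:2511.06557 — 7 statements merged into one kernel-verified Lean document; each statement's English description precedes it below -/
import Mathlib

section
/- Let n ≥ 1 and let λ, μ : {1,…,n} → ℝ satisfy 0 < λ_j ≤ μ_j for all j and λ_1 ≥ λ_2 ≥ … ≥ λ_n. Define A_j = Σ_{l=1}^{j} λ_l and define F : {1,…,n} → ℝ recursively by F_1 = λ_1 + μ_1 and F_j = max(A_j, F_{j-1}) + μ_j for j ≥ 2. Then F_j = λ_1 + Σ_{l=1}^{j} μ_l for every j ∈ {1,…,n}; that is, the physician serves the patients with no idle time, so the block schedule produced by Algorithm 1 is a no-idle block schedule (Lemma 1). -/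
/-- Lemma 1: with `A_j = Σ_{l=1}^j λ_l`, `F_1 = λ_1 + μ_1` and
`F_j = max(A_j, F_{j-1}) + μ_j`, we have `F_j = λ_1 + Σ_{l=1}^j μ_l` for every
`j ∈ {1,…,n}`: the physician incurs no idle time. -/
theorem stmt_1 (n : ℕ) (hn : 1 ≤ n) (lam mu : ℕ → ℝ)
    (hpos : ∀ j ∈ Finset.Icc 1 n, 0 < lam j)
    (hle : ∀ j ∈ Finset.Icc 1 n, lam j ≤ mu j)
    (hmono : ∀ i j, 1 ≤ i → i ≤ j → j ≤ n → lam j ≤ lam i)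
    (A : ℕ → ℝ) (hA : ∀ j, A j = ∑ l ∈ Finset.Icc 1 j, lam l)
    (F : ℕ → ℝ) (hF1 : F 1 = lam 1 + mu 1)
    (hF : ∀ j, 2 ≤ j → j ≤ n → F j = max (A j) (F (j - 1)) + mu j) :
    ∀ j ∈ Finset.Icc 1 n, F j = lam 1 + ∑ l ∈ Finset.Icc 1 j, mu l := by
  intro j hj
  simp only [Finset.mem_Icc] at hj
  obtain ⟨h1, h2⟩ := hj
  induction j with
  | zero => omega
  | succ k ih =>
    rcases Nat.lt_or_ge 1 (k + 1) with h | h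
    · -- inductive step: k ≥ 1
      have hk1 : 1 ≤ k := by omega
      have hk2 : k ≤ n := by omega
      have ihk := ih hk1 hk2
      have hFj := hF (k + 1) (by omega) h2
      simp only [Nat.add_sub_cancel] at hFj
      have hsplit : ∑ l ∈ Finset.Icc 1 (k + 1), lam l
          = lam 1 + ∑ l ∈ Finset.Icc 1 k, lam (l + 1) := by
        rw [Finset.Icc_eq_cons_Ioc (by omega), Finset.sum_cons]
        congr 1
        rw [show Finset.Ioc 1 (k + 1) = Finset.Icc 2 (k + 1) from
          (Finset.Icc_add_one_left_eq_Ioc 1 (k + 1)).symm]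
        rw [show Finset.Icc 2 (k + 1) = Finset.image (· + 1) (Finset.Icc 1 k) from by
          rw [Finset.image_add_right_Icc]]
        rw [Finset.sum_image (fun a _ b _ h => by omega)]
      have hmax : A (k + 1) ≤ F k := by
        rw [hA, ihk, hsplit]
        gcongr with l hl
        simp only [Finset.mem_Icc] at hl
        calc lam (l + 1) ≤ lam l := hmono l (l + 1) hl.1 (by omega) (by omega)
          _ ≤ mu l := hle l (Finset.mem_Icc.mpr ⟨hl.1, by omega⟩)
      rw [hFj, max_eq_right hmax, ihk, Finset.sum_Icc_succ_top (by omega)]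
      ring
    · -- base case: k + 1 = 1
      have hk : k = 0 := by omega
      subst hk
      simpa using hF1
end

section
/- Let n ≥ 1 and let λ, μ : {1,…,n} → ℝ satisfy 0 < λ_j ≤ μ_j for all j and λ_1 ≥ λ_2 ≥ … ≥ λ_n. In the no-idle schedule of Algorithm 1, the waiting time of patient j before seeing the physician, defined as w_j = max(A_j, F_{j-1}) − A_j (with w_1 = 0), equals w_j = Σ_{l=1}^{j-1} μ_l − Σ_{l=2}^{j} λ_l for every j ∈ {2,…,n}, and w_j ≥ 0 for all j. -/
/-- in the no-idle schedule of Algorithm 1, the stage-2 waiting time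
`w_j = max(A_j, F_{j-1}) − A_j` (with `w_1 = 0`) equals
`Σ_{l=1}^{j-1} μ_l − Σ_{l=2}^{j} λ_l` for `j ∈ {2,…,n}`, and `w_j ≥ 0` for all `j`. -/
theorem stmt_2 (n : ℕ) (hn : 1 ≤ n) (lam mu : ℕ → ℝ)
    (hpos : ∀ j ∈ Finset.Icc 1 n, 0 < lam j)
    (hle : ∀ j ∈ Finset.Icc 1 n, lam j ≤ mu j)
    (hmono : ∀ i j, 1 ≤ i → i ≤ j → j ≤ n → lam j ≤ lam i)
    (A : ℕ → ℝ) (hA : ∀ j, A j = ∑ l ∈ Finset.Icc 1 j, lam l)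
    (F : ℕ → ℝ) (hF1 : F 1 = lam 1 + mu 1)
    (hF : ∀ j, 2 ≤ j → j ≤ n → F j = max (A j) (F (j - 1)) + mu j)
    (w : ℕ → ℝ) (hw1 : w 1 = 0)
    (hw : ∀ j, 2 ≤ j → j ≤ n → w j = max (A j) (F (j - 1)) - A j) :
    (∀ j, 2 ≤ j → j ≤ n →
        w j = (∑ l ∈ Finset.Icc 1 (j - 1), mu l) - ∑ l ∈ Finset.Icc 2 j, lam l)
      ∧ (∀ j ∈ Finset.Icc 1 n, 0 ≤ w j) := by
  -- splitting lemma: ∑_{l=1}^{j} f l = f 1 + ∑_{l=2}^{j} f l for 1 ≤ j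
  have split : ∀ (f : ℕ → ℝ) (j : ℕ), 1 ≤ j →
      (∑ l ∈ Finset.Icc 1 j, f l) = f 1 + ∑ l ∈ Finset.Icc 2 j, f l := by
    intro f j hj
    have h1 : Finset.Icc 1 j = insert 1 (Finset.Icc 2 j) := by
      ext x
      simp only [Finset.mem_Icc, Finset.mem_insert]
      omega
    rw [h1, Finset.sum_insert (by simp)]
  -- key inequality: ∑_{l=2}^{j} λ_l ≤ ∑_{l=1}^{j-1} μ_l for 1 ≤ j ≤ n
  have key : ∀ j, 1 ≤ j → j ≤ n →
      (∑ l ∈ Finset.Icc 2 j, lam l) ≤ ∑ l ∈ Finset.Icc 1 (j - 1), mu l := by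
    intro j hj1
    induction j, hj1 using Nat.le_induction with
    | base => intro _; simp
    | succ j hj ih =>
      intro hjn
      have hjn' : j ≤ n := Nat.le_of_succ_le hjn
      have h1 : (∑ l ∈ Finset.Icc 2 (j + 1), lam l)
          = (∑ l ∈ Finset.Icc 2 j, lam l) + lam (j + 1) :=
        Finset.sum_Icc_succ_top (by omega) _
      have h2 : (∑ l ∈ Finset.Icc 1 j, mu l)
          = (∑ l ∈ Finset.Icc 1 (j - 1), mu l) + mu j := by
        conv_lhs => rw [show j = (j - 1) + 1 by omega,
          Finset.sum_Icc_succ_top (by omega), show (j - 1) + 1 = j by omega]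
      have hlj : lam (j + 1) ≤ mu j :=
        (hmono j (j + 1) hj (by omega) hjn).trans
          (hle j (Finset.mem_Icc.mpr ⟨hj, hjn'⟩))
      have := ih hjn'
      simp only [Nat.add_sub_cancel]
      rw [h1, h2]
      linarith
  -- F formula: F j = λ_1 + ∑_{l=1}^{j} μ_l for 1 ≤ j ≤ n
  have Ffor : ∀ j, 1 ≤ j → j ≤ n →
      F j = lam 1 + ∑ l ∈ Finset.Icc 1 j, mu l := by
    intro j hj1
    induction j, hj1 using Nat.le_induction with
    | base => intro _; simp [hF1]
    | succ j hj ih =>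
      intro hjn
      have hjn' : j ≤ n := Nat.le_of_succ_le hjn
      have ihF := ih hjn'
      have hAF : A (j + 1) ≤ F j := by
        rw [hA, ihF, split lam (j + 1) (by omega)]
        have hk := key (j + 1) (by omega) hjn
        simp only [Nat.add_sub_cancel] at hk
        linarith
      have hFj := hF (j + 1) (by omega) hjn
      simp only [Nat.add_sub_cancel] at hFj
      rw [hFj, max_eq_right hAF, ihF,
        Finset.sum_Icc_succ_top (by omega : 1 ≤ j + 1)]
      ring
  -- w formula
  have wfor : ∀ j, 2 ≤ j → j ≤ n →
      w j = (∑ l ∈ Finset.Icc 1 (j - 1), mu l) - ∑ l ∈ Finset.Icc 2 j, lam l := by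
    intro j hj2 hjn
    have hAF : A j ≤ F (j - 1) := by
      rw [hA, Ffor (j - 1) (by omega) (by omega), split lam j (by omega)]
      have hk := key j (by omega) hjn
      linarith
    rw [hw j hj2 hjn, max_eq_right hAF, Ffor (j - 1) (by omega) (by omega),
      hA, split lam j (by omega)]
    ring
  refine ⟨wfor, ?_⟩
  intro j hj
  simp only [Finset.mem_Icc] at hj
  rcases eq_or_lt_of_le hj.1 with h1 | h1
  · rw [← h1, hw1]
  · have := wfor j h1 hj.2
    have hk := key j (by omega) hj.2
    linarith
end

section
/- Let λ, μ : P → ℝ be the service times of a finite set P of n ≥ 1 patients with 0 < λ_p ≤ μ_p for all p, and for a bijection σ : {1,…,n} → P define W(σ) = Σ_{i=1}^{n-1} (n−i)·(μ_{σ(i)} − λ_{σ(i+1)}). Let S be the set of bijections σ with λ_{σ(1)} ≥ λ_{σ(2)} ≥ … ≥ λ_{σ(n)}. If σ* ∈ S additionally satisfies the tie-breaking rule that λ_{σ*(i)} = λ_{σ*(i+1)} implies μ_{σ*(i)} ≤ μ_{σ*(i+1)} for all 1 ≤ i ≤ n−1 (the sequence produced by Algorithm 1), then W(σ*) ≤ W(σ)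 for every σ ∈ S (Lemma 3). -/
/-- Chain version of a one-step nonincreasing hypothesis. -/
private lemma chainMono {f : ℕ → ℝ} {n : ℕ}
    (h : ∀ i, 1 ≤ i → i + 1 ≤ n → f (i + 1) ≤ f i) :
    ∀ i j, 1 ≤ i → i ≤ j → j ≤ n → f j ≤ f i := by
  intro i j hi
  induction j with
  | zero => intro h1 h2; omega
  | succ k ih =>
    intro hij hjn
    rcases Nat.lt_or_ge i (k + 1) with hlt | hge
    · have hik : i ≤ k := by omega
      exact le_trans (h k (by omega) (by omega)) (ih hik (by omega))
    · have hik : i = k + 1 := by omega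
      subst hik; exact le_refl _

/-- Chain version of the tie-breaking rule. -/
private lemma chainTie {lamf muf : ℕ → ℝ} {n : ℕ}
    (hm : ∀ i, 1 ≤ i → i + 1 ≤ n → lamf (i + 1) ≤ lamf i)
    (ht : ∀ i, 1 ≤ i → i + 1 ≤ n → lamf i = lamf (i + 1) → muf i ≤ muf (i + 1)) :
    ∀ i j, 1 ≤ i → i ≤ j → j ≤ n → lamf i = lamf j → muf i ≤ muf j := by
  intro i j hi
  induction j with
  | zero => intro h1 h2 h3; omega
  | succ k ih =>
    intro hij hjn hlam
    rcases Nat.lt_or_ge i (k + 1) with hlt | hge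
    · have hik : i ≤ k := by omega
      have h1 : lamf (k + 1) ≤ lamf k := hm k (by omega) (by omega)
      have h2 : lamf k ≤ lamf i := chainMono hm i k hi hik (by omega)
      have hik_eq : lamf i = lamf k := by linarith
      have h3 := ih hik (by omega) hik_eq
      have h4 := ht k (by omega) (by omega) (by linarith)
      linarith
    · have hik : i = k + 1 := by omega
      subst hik; exact le_refl _

/-- Two nonincreasingly `lam`-sorted enumerations of the same finite set have
pointwise comparable (hence equal) `lam`-values. -/
private lemma sortedLe {P : Type*} [Fintype P] (lam : P → ℝ) (n : ℕ)
    (σ τ : ℕ → P)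
    (hσ : Set.BijOn σ (Set.Icc 1 n) Set.univ)
    (hτ : Set.BijOn τ (Set.Icc 1 n) Set.univ)
    (hσm : ∀ i j, 1 ≤ i → i ≤ j → j ≤ n → lam (σ j) ≤ lam (σ i))
    (hτm : ∀ i j, 1 ≤ i → i ≤ j → j ≤ n → lam (τ j) ≤ lam (τ i))
    (i : ℕ) (hi1 : 1 ≤ i) (hin : i ≤ n) : lam (σ i) ≤ lam (τ i) := by
  classical
  by_contra hlt'
  push_neg at hlt'
  -- hlt' : lam (τ i) < lam (σ i)
  set A : Finset P := Finset.univ.filter (fun p => lam (σ i) ≤ lam p) with hA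
  have h1 : (Finset.Icc 1 i).image σ ⊆ A := by
    intro p hp
    simp only [Finset.mem_image, Finset.mem_Icc] at hp
    obtain ⟨j, ⟨hj1, hj2⟩, rfl⟩ := hp
    simp only [hA, Finset.mem_filter, Finset.mem_univ, true_and]
    exact hσm j i hj1 hj2 hin
  have hinj : Set.InjOn σ ↑(Finset.Icc 1 i) := by
    rw [Finset.coe_Icc]
    exact hσ.injOn.mono (Set.Icc_subset_Icc_right hin)
  have hcard1 : i ≤ A.card := by
    have h := Finset.card_le_card h1
    rwa [Finset.card_image_of_injOn hinj, Nat.card_Icc, Nat.add_sub_cancel] at h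
  have h2 : A ⊆ (Finset.Icc 1 (i - 1)).image τ := by
    intro p hp
    simp only [hA, Finset.mem_filter, Finset.mem_univ, true_and] at hp
    obtain ⟨j, hj, rfl⟩ := hτ.surjOn (Set.mem_univ p)
    rw [Set.mem_Icc] at hj
    have hji : j < i := by
      by_contra hge
      push_neg at hge
      have := hτm i j hi1 hge hj.2
      linarith
    exact Finset.mem_image.2 ⟨j, Finset.mem_Icc.2 ⟨hj.1, by omega⟩, rfl⟩
  have hcard2 : A.card ≤ i - 1 := by
    calc A.card ≤ ((Finset.Icc 1 (i - 1)).image τ).card := Finset.card_le_card h2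
      _ ≤ (Finset.Icc 1 (i - 1)).card := Finset.card_image_le
      _ = i - 1 := by rw [Nat.card_Icc]; omega
  omega

/-- Lemma 3: among all sequences `σ` of the `n` patients with
nonincreasing `λ∘σ`, the sequence `σ*` that additionally breaks ties in `λ` in
favor of smaller `μ` (the sequence produced by Algorithm 1) minimizes the total
waiting time `W(σ) = Σ_{i=1}^{n-1} (n−i)(μ_{σ(i)} − λ_{σ(i+1)})`. -/
theorem stmt_5 (P : Type*) [Fintype P] (lam mu : P → ℝ)
    (hpos : ∀ p, 0 < lam p) (hle : ∀ p, lam p ≤ mu p)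
    (n : ℕ) (hn1 : 1 ≤ n) (hn : n = Fintype.card P)
    (σstar : ℕ → P) (hσstar : Set.BijOn σstar (Set.Icc 1 n) Set.univ)
    (hstar_mono : ∀ i, 1 ≤ i → i + 1 ≤ n → lam (σstar (i + 1)) ≤ lam (σstar i))
    (hstar_tie : ∀ i, 1 ≤ i → i + 1 ≤ n →
      lam (σstar i) = lam (σstar (i + 1)) → mu (σstar i) ≤ mu (σstar (i + 1))) :
    ∀ σ : ℕ → P, Set.BijOn σ (Set.Icc 1 n) Set.univ →
      (∀ i, 1 ≤ i → i + 1 ≤ n → lam (σ (i + 1)) ≤ lam (σ i)) →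
      (∑ i ∈ Finset.Icc 1 (n - 1), ((n - i : ℕ) : ℝ) * (mu (σstar i) - lam (σstar (i + 1))))
        ≤ ∑ i ∈ Finset.Icc 1 (n - 1), ((n - i : ℕ) : ℝ) * (mu (σ i) - lam (σ (i + 1))) := by
  intro σ hσ hmono
  classical
  obtain ⟨m, rfl⟩ : ∃ m, n = m + 1 := ⟨n - 1, by omega⟩
  simp only [Nat.add_sub_cancel]
  -- chain versions of monotonicity / tie rules
  have hσm : ∀ i j, 1 ≤ i → i ≤ j → j ≤ m + 1 → lam (σ j) ≤ lam (σ i) :=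
    chainMono hmono
  have hsm : ∀ i j, 1 ≤ i → i ≤ j → j ≤ m + 1 → lam (σstar j) ≤ lam (σstar i) :=
    chainMono hstar_mono
  have htie : ∀ i j, 1 ≤ i → i ≤ j → j ≤ m + 1 →
      lam (σstar i) = lam (σstar j) → mu (σstar i) ≤ mu (σstar j) :=
    chainTie hstar_mono hstar_tie
  -- the two sorted sequences of lam-values coincide
  have heq : ∀ i, 1 ≤ i → i ≤ m + 1 → lam (σ i) = lam (σstar i) := fun i h1 h2 =>
    le_antisymm (sortedLe lam (m + 1) σ σstar hσ hσstar hσm hsm i h1 h2)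
      (sortedLe lam (m + 1) σstar σ hσstar hσ hsm hσm i h1 h2)
  -- a large constant K bounding all relevant difference quotients
  set T := Finset.Icc 1 (m + 1) ×ˢ Finset.Icc 1 (m + 1) with hT
  set K : ℝ := ∑ q ∈ T, max 0 (if lam (σstar q.1) = lam (σstar q.2) then 0 else
      (mu (σstar q.1) - mu (σstar q.2)) / (lam (σstar q.1) - lam (σstar q.2))) with hK
  have hKbound : ∀ i j, i ∈ Finset.Icc 1 (m + 1) → j ∈ Finset.Icc 1 (m + 1) →
      lam (σstar j) < lam (σstar i) →
      mu (σstar i) - mu (σstar j) ≤ K * (lam (σstar i) - lam (σstar j)) := by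
    intro i j hi hj hlam
    have hmem : (i, j) ∈ T := Finset.mem_product.2 ⟨hi, hj⟩
    have hne : lam (σstar i) ≠ lam (σstar j) := ne_of_gt hlam
    have h0 : ∀ q ∈ T, (0 : ℝ) ≤ max 0 (if lam (σstar q.1) = lam (σstar q.2) then 0 else
        (mu (σstar q.1) - mu (σstar q.2)) / (lam (σstar q.1) - lam (σstar q.2))) :=
      fun q _ => le_max_left _ _
    have hsingle := Finset.single_le_sum h0 hmem
    rw [← hK] at hsingle
    simp only [hne, if_false] at hsingle
    have hterm : (mu (σstar i) - mu (σstar j)) / (lam (σstar i) - lam (σstar j)) ≤ K :=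
      le_trans (le_max_right _ _) hsingle
    have hposd : 0 < lam (σstar i) - lam (σstar j) := by linarith
    calc mu (σstar i) - mu (σstar j)
        = ((mu (σstar i) - mu (σstar j)) / (lam (σstar i) - lam (σstar j))) *
            (lam (σstar i) - lam (σstar j)) := (div_mul_cancel₀ _ (ne_of_gt hposd)).symm
      _ ≤ K * (lam (σstar i) - lam (σstar j)) :=
          mul_le_mul_of_nonneg_right hterm hposd.le
  -- the perturbed key function
  set G : ℕ → ℝ := fun i => mu (σstar i) - K * lam (σstar i) with hG
  have hanti : AntivaryOn (fun i => ((m + 1 - i : ℕ) : ℝ)) G ↑(Finset.Icc 1 (m + 1)) := by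
    intro i hi j hj hGij
    simp only [Finset.coe_Icc, Set.mem_Icc] at hi hj
    have hij : i ≤ j := by
      by_contra hji
      push_neg at hji
      have hlam_le : lam (σstar i) ≤ lam (σstar j) := hsm j i hj.1 hji.le hi.2
      simp only [hG] at hGij
      rcases eq_or_lt_of_le hlam_le with heq' | hlt'
      · have hmu : mu (σstar j) ≤ mu (σstar i) := htie j i hj.1 hji.le hi.2 heq'.symm
        rw [heq'] at hGij
        linarith
      · have hb := hKbound j i (Finset.mem_Icc.2 hj) (Finset.mem_Icc.2 hi) hlt'
        linarith
    have hnat : m + 1 - j ≤ m + 1 - i := Nat.sub_le_sub_left hij _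
    show ((m + 1 - j : ℕ) : ℝ) ≤ ((m + 1 - i : ℕ) : ℝ)
    exact_mod_cast hnat
  -- build the permutation π with σstar ∘ π = σ on [1, m+1]
  haveI : DecidablePred (· ∈ Set.Icc 1 (m + 1)) := fun _ => Classical.dec _
  set eS := Set.BijOn.equiv σstar hσstar with heS
  set eT := Set.BijOn.equiv σ hσ with heT
  set π0 : ↥(Set.Icc 1 (m + 1)) ≃ ↥(Set.Icc 1 (m + 1)) := eT.trans eS.symm with hπ0
  set π : Equiv.Perm ℕ := Equiv.Perm.extendDomain π0 (Equiv.refl _) with hπ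
  have hcoeS : ∀ x, ((eS x : P)) = σstar ↑x := fun x => rfl
  have hcoeT : ∀ x, ((eT x : P)) = σ ↑x := fun x => rfl
  have hπsub : ∀ i, ∀ hi : i ∈ Set.Icc 1 (m + 1), π i = ↑(π0 ⟨i, hi⟩) := by
    intro i hi
    rw [hπ]
    simpa using Equiv.Perm.extendDomain_apply_subtype π0 (Equiv.refl _) hi
  have hπmem : ∀ i, ∀ hi : i ∈ Set.Icc 1 (m + 1), π i ∈ Set.Icc 1 (m + 1) := by
    intro i hi
    rw [hπsub i hi]
    exact (π0 ⟨i, hi⟩).2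
  have hπσ : ∀ i, ∀ hi : i ∈ Set.Icc 1 (m + 1), σstar (π i) = σ i := by
    intro i hi
    rw [hπsub i hi, ← hcoeS (π0 ⟨i, hi⟩)]
    have h2 : eS (π0 ⟨i, hi⟩) = eT ⟨i, hi⟩ := by
      simp [hπ0]
    rw [h2]
    exact hcoeT _
  have hπsupp : {x | π x ≠ x} ⊆ ↑(Finset.Icc 1 (m + 1)) := by
    intro x hx
    rw [Finset.coe_Icc]
    by_contra hxm
    refine hx ?_
    rw [hπ]
    exact Equiv.Perm.extendDomain_apply_not_subtype π0 (Equiv.refl _) hxm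
  -- rearrangement inequality
  have key := hanti.sum_smul_le_sum_smul_comp_perm hπsupp
  have hLHS : ∀ i ∈ Finset.Icc 1 (m + 1),
      ((m + 1 - i : ℕ) : ℝ) • G i =
        ((m + 1 - i : ℕ) : ℝ) * mu (σstar i) -
          ((m + 1 - i : ℕ) : ℝ) * (K * lam (σstar i)) := by
    intro i _
    simp only [hG, smul_eq_mul]
    ring
  have hRHS : ∀ i ∈ Finset.Icc 1 (m + 1),
      ((m + 1 - i : ℕ) : ℝ) • G (π i) =
        ((m + 1 - i : ℕ) : ℝ) * mu (σ i) -
          ((m + 1 - i : ℕ) : ℝ) * (K * lam (σstar i)) := by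
    intro i hi
    have hi' : i ∈ Set.Icc 1 (m + 1) := by rwa [← Finset.coe_Icc, Finset.mem_coe]
    have h1 : σstar (π i) = σ i := hπσ i hi'
    have hi'' := Set.mem_Icc.1 hi'
    have h2 : lam (σstar (π i)) = lam (σstar i) := by
      rw [h1]; exact heq i hi''.1 hi''.2
    simp only [hG, smul_eq_mul]
    rw [h2, h1]
    ring
  rw [Finset.sum_congr rfl hLHS, Finset.sum_congr rfl hRHS,
    Finset.sum_sub_distrib, Finset.sum_sub_distrib] at key
  have hmusum : ∑ i ∈ Finset.Icc 1 (m + 1), ((m + 1 - i : ℕ) : ℝ) * mu (σstar i) ≤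
      ∑ i ∈ Finset.Icc 1 (m + 1), ((m + 1 - i : ℕ) : ℝ) * mu (σ i) := by linarith
  -- drop the vanishing top term
  have hsplit : ∀ f : ℕ → ℝ,
      ∑ i ∈ Finset.Icc 1 (m + 1), f i = ∑ i ∈ Finset.Icc 1 m, f i + f (m + 1) :=
    fun f => Finset.sum_Icc_succ_top (by omega) f
  rw [hsplit (fun i => ((m + 1 - i : ℕ) : ℝ) * mu (σstar i)),
    hsplit (fun i => ((m + 1 - i : ℕ) : ℝ) * mu (σ i))] at hmusum
  simp only [Nat.sub_self, Nat.cast_zero, zero_mul, add_zero] at hmusum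
  -- final assembly
  have expand : ∀ τ : ℕ → P,
      ∑ i ∈ Finset.Icc 1 m, ((m + 1 - i : ℕ) : ℝ) * (mu (τ i) - lam (τ (i + 1))) =
        ∑ i ∈ Finset.Icc 1 m, ((m + 1 - i : ℕ) : ℝ) * mu (τ i) -
          ∑ i ∈ Finset.Icc 1 m, ((m + 1 - i : ℕ) : ℝ) * lam (τ (i + 1)) := by
    intro τ
    rw [← Finset.sum_sub_distrib]
    exact Finset.sum_congr rfl fun i _ => by ring
  rw [expand, expand]
  have hlamsum : ∑ i ∈ Finset.Icc 1 m, ((m + 1 - i : ℕ) : ℝ) * lam (σ (i + 1)) =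
      ∑ i ∈ Finset.Icc 1 m, ((m + 1 - i : ℕ) : ℝ) * lam (σstar (i + 1)) :=
    Finset.sum_congr rfl fun i hi => by
      have hi' := Finset.mem_Icc.1 hi
      rw [heq (i + 1) (by omega) (by omega)]
  rw [hlamsum]
  linarith
end

section
/- Let n ≥ 2 and let λ, μ : {1,…,n} → ℝ satisfy 0 < λ_j ≤ μ_j for all j and λ_1 ≥ λ_2 ≥ … ≥ λ_n. Then the total patient waiting time W = Σ_{j=1}^{n-1} (n−j)·(μ_j − λ_{j+1}) satisfies W ≥ γ₁ − γ₂, where γ₁ = max_{1 ≤ j ≤ n−1} μ_j and γ₂ = min_{2 ≤ j ≤ n} λ_j; hence the upper bound (n(n−1)/2)(γ₁ − γ₂) of Lemma 4 is tight up to the constant factor n(n−1)/2 (tightness part of Lemma 4). -/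
/-- tightness part of Lemma 4: with `n ≥ 2` `Q⁺` patients ordered
by Algorithm 1, the total waiting time `W = Σ_{j=1}^{n-1} (n−j)(μ_j − λ_{j+1})`
satisfies `W ≥ γ₁ − γ₂` where `γ₁ = max_{1≤j≤n−1} μ_j` and `γ₂ = min_{2≤j≤n} λ_j`. -/
theorem stmt_7 (n : ℕ) (hn : 2 ≤ n) (lam mu : ℕ → ℝ)
    (hpos : ∀ j ∈ Finset.Icc 1 n, 0 < lam j)
    (hle : ∀ j ∈ Finset.Icc 1 n, lam j ≤ mu j)
    (hmono : ∀ i j, 1 ≤ i → i ≤ j → j ≤ n → lam j ≤ lam i) :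
    (Finset.Icc 1 (n - 1)).sup' (Finset.nonempty_Icc.mpr (by omega)) mu
        - (Finset.Icc 2 n).inf' (Finset.nonempty_Icc.mpr hn) lam
      ≤ ∑ j ∈ Finset.Icc 1 (n - 1), ((n - j : ℕ) : ℝ) * (mu j - lam (j + 1)) := by
  -- the infimum is lam n by monotonicity
  have hinf : (Finset.Icc 2 n).inf' (Finset.nonempty_Icc.mpr hn) lam = lam n := by
    apply le_antisymm
    · exact Finset.inf'_le _ (Finset.mem_Icc.mpr ⟨hn, le_rfl⟩)
    · apply Finset.le_inf'
      intro j hj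
      rw [Finset.mem_Icc] at hj
      exact hmono j n (by omega) hj.2 le_rfl
  -- the sup is attained
  obtain ⟨a, ha, hsup⟩ := Finset.exists_mem_eq_sup' (Finset.nonempty_Icc.mpr (by omega : 1 ≤ n - 1)) mu
  rw [Finset.mem_Icc] at ha
  rw [hinf, hsup]
  -- telescoping lemma
  have key : ∀ k a, a + k = n - 1 → 1 ≤ a →
      mu a - lam n ≤ ∑ j ∈ Finset.Icc a (n - 1), (mu j - lam (j + 1)) := by
    intro k
    induction k with
    | zero =>
      intro a hak ha1
      have : a = n - 1 := by omega
      subst this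
      rw [Finset.Icc_self, Finset.sum_singleton]
      have : n - 1 + 1 = n := by omega
      rw [this]
    | succ k ih =>
      intro a hak ha1
      have hsplit : Finset.Icc a (n - 1) = insert a (Finset.Icc (a + 1) (n - 1)) := by
        ext x
        simp only [Finset.mem_Icc, Finset.mem_insert]
        omega
      rw [hsplit, Finset.sum_insert (by simp [Finset.mem_Icc])]
      have h1 := ih (a + 1) (by omega) (by omega)
      have h2 : lam (a + 1) ≤ mu (a + 1) := hle (a + 1) (Finset.mem_Icc.mpr ⟨by omega, by omega⟩)
      linarith
  have hstep : mu a - lam n ≤ ∑ j ∈ Finset.Icc a (n - 1), (mu j - lam (j + 1)) :=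
    key (n - 1 - a) a (by omega) ha.1
  refine hstep.trans ?_
  -- each unweighted term ≤ weighted term, other terms nonneg
  have tnn : ∀ j, 1 ≤ j → j ≤ n - 1 → 0 ≤ mu j - lam (j + 1) := by
    intro j h1 h2
    have h3 : lam (j+1) ≤ lam j := hmono j (j+1) h1 (by omega) (by omega)
    have h4 : lam j ≤ mu j := hle j (Finset.mem_Icc.mpr ⟨h1, by omega⟩)
    linarith
  have hA : ∑ j ∈ Finset.Icc a (n - 1), (mu j - lam (j + 1))
      ≤ ∑ j ∈ Finset.Icc a (n - 1), ((n - j : ℕ) : ℝ) * (mu j - lam (j + 1)) := by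
    apply Finset.sum_le_sum
    intro j hj
    rw [Finset.mem_Icc] at hj
    have h1 : (1 : ℝ) ≤ ((n - j : ℕ) : ℝ) := by
      have : 1 ≤ n - j := by omega
      exact_mod_cast this
    nlinarith [tnn j (by omega) hj.2]
  have hB : ∑ j ∈ Finset.Icc a (n - 1), ((n - j : ℕ) : ℝ) * (mu j - lam (j + 1))
      ≤ ∑ j ∈ Finset.Icc 1 (n - 1), ((n - j : ℕ) : ℝ) * (mu j - lam (j + 1)) := by
    apply Finset.sum_le_sum_of_subset_of_nonneg (Finset.Icc_subset_Icc_left ha.1)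
    intro j hj _
    rw [Finset.mem_Icc] at hj
    have h1 : (0 : ℝ) ≤ ((n - j : ℕ) : ℝ) := by positivity
    exact mul_nonneg h1 (tnn j hj.1 hj.2)
  linarith
end

section
/- Let r ≥ 1, 0 ≤ w ≤ 2, and λ : {1,…,r} → ℝ with λ_j > 0 for all j. Set appointment times τ_1 = 0 and τ_j = (1 − w/2)·Σ_{l=1}^{j-1} λ_l for j ≥ 2. Suppose the realized service times λ̃_j satisfy λ̃_j ≥ (1 − w/2)·λ_j for all j. Define the PA start times recursively by s_1 = 0 and s_{j+1} = max(τ_{j+1}, s_j + λ̃_j). Then s_j = Σ_{l=1}^{j-1} λ̃_l for every j ∈ {1,…,r}; that is, the physician assistant incurs no idle time on any such realized sample path (PA part of Lemma 6). -/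
/-- PA part of Lemma 6: with appointment times
`τ_j = (1 − w/2)·Σ_{l=1}^{j-1} λ_l` (so `τ_1 = 0`) and realized service times
`λ̃_j ≥ (1 − w/2)·λ_j`, the PA start times `s_1 = 0`,
`s_{j+1} = max(τ_{j+1}, s_j + λ̃_j)` satisfy `s_j = Σ_{l=1}^{j-1} λ̃_l` for all
`j ∈ {1,…,r}`: the PA incurs no idle time on any such realized sample path. -/
theorem stmt_9 (r : ℕ) (hr : 1 ≤ r) (w : ℝ) (hw0 : 0 ≤ w) (hw2 : w ≤ 2)
    (lam lamT : ℕ → ℝ)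
    (hpos : ∀ j ∈ Finset.Icc 1 r, 0 < lam j)
    (hreal : ∀ j ∈ Finset.Icc 1 r, (1 - w / 2) * lam j ≤ lamT j)
    (τ : ℕ → ℝ) (hτ : ∀ j, τ j = (1 - w / 2) * ∑ l ∈ Finset.Icc 1 (j - 1), lam l)
    (s : ℕ → ℝ) (hs1 : s 1 = 0)
    (hs : ∀ j, 1 ≤ j → j + 1 ≤ r → s (j + 1) = max (τ (j + 1)) (s j + lamT j)) :
    ∀ j ∈ Finset.Icc 1 r, s j = ∑ l ∈ Finset.Icc 1 (j - 1), lamT l := by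
  intro j hj
  simp only [Finset.mem_Icc] at hj
  obtain ⟨hj1, hjr⟩ := hj
  induction j with
  | zero => omega
  | succ n ih =>
    rcases Nat.eq_or_lt_of_le hj1 with h1 | h1
    · simp [← h1, hs1]
    · have hn1 : 1 ≤ n := by omega
      have hnr : n + 1 ≤ r := hjr
      have ihn := ih hn1 (by omega)
      rw [hs n hn1 hnr, ihn, hτ]
      have hle : (1 - w / 2) * ∑ l ∈ Finset.Icc 1 (n + 1 - 1), lam l ≤
          ∑ l ∈ Finset.Icc 1 n, lamT l := by
        simp only [Nat.add_sub_cancel]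
        rw [Finset.mul_sum]
        apply Finset.sum_le_sum
        intro i hi
        apply hreal
        simp only [Finset.mem_Icc] at hi ⊢
        omega
      have hsum : ∑ l ∈ Finset.Icc 1 (n - 1), lamT l + lamT n =
          ∑ l ∈ Finset.Icc 1 n, lamT l := by
        rw [show n = (n - 1) + 1 by omega, Finset.sum_Icc_succ_top (by omega)]
        simp
      rw [hsum, max_eq_right hle]
      congr 1
end

section
/- Let g ≥ 2, let λ, μ : {1,…,g} → ℝ satisfy 0 < λ_j ≤ μ_j for all j and λ_1 ≥ λ_2 ≥ … ≥ λ_g, and let w ≥ 0 satisfy w·Σ_{k=1}^{i} (μ_k + λ_{k+1}) ≤ 2·Σ_{k=1}^{i} (μ_k − λ_{k+1}) for every 1 ≤ i ≤ g−1. Suppose realized service times satisfy λ̃_k ≤ (1 + w/2)·λ_k and μ̃_k ≥ (1 − w/2)·μ_k for all k. Then Σ_{k=1}^{i} μ̃_k ≥ Σ_{k=2}^{i+1} λ̃_k for every 1 ≤ i ≤ g−1 (the key inequality ensuring no physician idle time in Lemma 6). -/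
/-- key inequality in Lemma 6: if
`w·Σ_{k=1}^{i}(μ_k + λ_{k+1}) ≤ 2·Σ_{k=1}^{i}(μ_k − λ_{k+1})` for all
`1 ≤ i ≤ g−1`, and the realized times satisfy `λ̃_k ≤ (1 + w/2)λ_k`,
`μ̃_k ≥ (1 − w/2)μ_k`, then `Σ_{k=1}^{i} μ̃_k ≥ Σ_{k=2}^{i+1} λ̃_k` for all
`1 ≤ i ≤ g−1`. -/
theorem stmt_10 (g : ℕ) (hg : 2 ≤ g) (lam mu : ℕ → ℝ)
    (hpos : ∀ j ∈ Finset.Icc 1 g, 0 < lam j)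
    (hle : ∀ j ∈ Finset.Icc 1 g, lam j ≤ mu j)
    (hmono : ∀ i j, 1 ≤ i → i ≤ j → j ≤ g → lam j ≤ lam i)
    (w : ℝ) (hw : 0 ≤ w)
    (hcond : ∀ i, 1 ≤ i → i ≤ g - 1 →
      w * ∑ k ∈ Finset.Icc 1 i, (mu k + lam (k + 1))
        ≤ 2 * ∑ k ∈ Finset.Icc 1 i, (mu k - lam (k + 1)))
    (lamT muT : ℕ → ℝ)
    (hlamT : ∀ k ∈ Finset.Icc 1 g, lamT k ≤ (1 + w / 2) * lam k)
    (hmuT : ∀ k ∈ Finset.Icc 1 g, (1 - w / 2) * mu k ≤ muT k) :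
    ∀ i, 1 ≤ i → i ≤ g - 1 →
      (∑ k ∈ Finset.Icc 2 (i + 1), lamT k) ≤ ∑ k ∈ Finset.Icc 1 i, muT k := by
  intro i hi1 hig
  have hig' : i + 1 ≤ g := by omega
  -- shift the left sum
  have hshift : ∀ n : ℕ, (∑ k ∈ Finset.Icc 2 (n + 1), lamT k)
      = ∑ k ∈ Finset.Icc 1 n, lamT (k + 1) := by
    intro n
    induction n with
    | zero => simp
    | succ m ih =>
      rw [Finset.sum_Icc_succ_top (by omega : (2:ℕ) ≤ m + 1 + 1),
        Finset.sum_Icc_succ_top (by omega : (1:ℕ) ≤ m + 1), ih]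
  rw [hshift i]
  have h1 : (∑ k ∈ Finset.Icc 1 i, lamT (k + 1))
      ≤ ∑ k ∈ Finset.Icc 1 i, (1 + w / 2) * lam (k + 1) := by
    apply Finset.sum_le_sum
    intro k hk
    simp only [Finset.mem_Icc] at hk
    exact hlamT (k + 1) (Finset.mem_Icc.mpr ⟨by omega, by omega⟩)
  have h2 : (∑ k ∈ Finset.Icc 1 i, (1 - w / 2) * mu k)
      ≤ ∑ k ∈ Finset.Icc 1 i, muT k := by
    apply Finset.sum_le_sum
    intro k hk
    simp only [Finset.mem_Icc] at hk
    exact hmuT k (Finset.mem_Icc.mpr ⟨by omega, by omega⟩)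
  have hc := hcond i hi1 hig
  have key : (∑ k ∈ Finset.Icc 1 i, (1 + w / 2) * lam (k + 1))
      ≤ ∑ k ∈ Finset.Icc 1 i, (1 - w / 2) * mu k := by
    have e1 : (∑ k ∈ Finset.Icc 1 i, (1 + w / 2) * lam (k + 1))
        - ∑ k ∈ Finset.Icc 1 i, (1 - w / 2) * mu k
        = (w / 2) * (∑ k ∈ Finset.Icc 1 i, (mu k + lam (k + 1)))
          - ∑ k ∈ Finset.Icc 1 i, (mu k - lam (k + 1)) := by
      rw [Finset.mul_sum, ← Finset.sum_sub_distrib, ← Finset.sum_sub_distrib]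
      apply Finset.sum_congr rfl
      intro k _
      ring
    nlinarith [hc]
  linarith
end

section
/- Let g ≥ 1, let λ, μ : {1,…,g} → ℝ satisfy 0 < λ_j ≤ μ_j for all j and λ_1 ≥ λ_2 ≥ … ≥ λ_g, and let w ∈ [0,2] satisfy w·Σ_{k=1}^{i} (μ_k + λ_{k+1}) ≤ 2·Σ_{k=1}^{i} (μ_k − λ_{k+1}) for every 1 ≤ i ≤ g−1. Suppose realized service times satisfy (1 − w/2)λ_j ≤ λ̃_j ≤ (1 + w/2)λ_j and (1 − w/2)μ_j ≤ μ̃_j ≤ (1 + w/2)μ_j for all j. Let C_j = Σ_{l=1}^{j} λ̃_l be the realized PA completion times, and define the realized physician completion times by F̃_1 = C_1 + μ̃_1 and F̃_j = max(C_j, F̃_{j-1}) + μ̃_j for j ≥ 2. Then F̃_j = λ̃_1 + Σ_{l=1}^{j} μ̃_l for every j ∈ {1,…,g}; that is, under the stated bound on w, the schedule of Algorithm 1 has no physician idle time on every realized sample path (Lemma 6). -/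
private lemma icc_sum_eq_range {M : Type*} [AddCommMonoid M] (f : ℕ → M) :
    ∀ n : ℕ, ∑ l ∈ Finset.Icc 1 n, f l = ∑ i ∈ Finset.range n, f (i + 1)
  | 0 => by simp
  | n + 1 => by
    rw [Finset.sum_Icc_succ_top (by omega : 1 ≤ n + 1), Finset.sum_range_succ,
      icc_sum_eq_range f n]

/-- Lemma 6: under the stated bound on `w`, the schedule of
Algorithm 1 has no physician idle time on every realized sample path: the
realized physician completion times `F̃_1 = C_1 + μ̃_1`,
`F̃_j = max(C_j, F̃_{j-1}) + μ̃_j` (with `C_j = Σ_{l=1}^{j} λ̃_l`) satisfy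
`F̃_j = λ̃_1 + Σ_{l=1}^{j} μ̃_l` for all `j ∈ {1,…,g}`. -/
theorem stmt_11 (g : ℕ) (hg : 1 ≤ g) (lam mu : ℕ → ℝ)
    (hpos : ∀ j ∈ Finset.Icc 1 g, 0 < lam j)
    (hle : ∀ j ∈ Finset.Icc 1 g, lam j ≤ mu j)
    (hmono : ∀ i j, 1 ≤ i → i ≤ j → j ≤ g → lam j ≤ lam i)
    (w : ℝ) (hw0 : 0 ≤ w) (hw2 : w ≤ 2)
    (hcond : ∀ i, 1 ≤ i → i ≤ g - 1 →
      w * ∑ k ∈ Finset.Icc 1 i, (mu k + lam (k + 1))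
        ≤ 2 * ∑ k ∈ Finset.Icc 1 i, (mu k - lam (k + 1)))
    (lamT muT : ℕ → ℝ)
    (hlamT : ∀ j ∈ Finset.Icc 1 g,
      (1 - w / 2) * lam j ≤ lamT j ∧ lamT j ≤ (1 + w / 2) * lam j)
    (hmuT : ∀ j ∈ Finset.Icc 1 g,
      (1 - w / 2) * mu j ≤ muT j ∧ muT j ≤ (1 + w / 2) * mu j)
    (C : ℕ → ℝ) (hC : ∀ j, C j = ∑ l ∈ Finset.Icc 1 j, lamT l)
    (Ft : ℕ → ℝ) (hFt1 : Ft 1 = C 1 + muT 1)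
    (hFt : ∀ j, 2 ≤ j → j ≤ g → Ft j = max (C j) (Ft (j - 1)) + muT j) :
    ∀ j ∈ Finset.Icc 1 g, Ft j = lamT 1 + ∑ l ∈ Finset.Icc 1 j, muT l := by
  have key : ∀ j, 1 ≤ j → j ≤ g → Ft j = lamT 1 + ∑ l ∈ Finset.Icc 1 j, muT l := by
    intro j
    induction j with
    | zero => omega
    | succ n ih =>
      intro h1 hgj
      rcases Nat.eq_zero_or_pos n with hn | hn
      · subst hn
        rw [hFt1, hC 1]
        simp
      · have hFn := ih hn (by omega)
        have hstep := hFt (n + 1) (by omega) hgj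
        simp only [Nat.add_sub_cancel] at hstep
        have hCle : C (n + 1) ≤ Ft n := by
          rw [hC (n + 1), hFn]
          rw [icc_sum_eq_range, icc_sum_eq_range, Finset.sum_range_succ']
          have h2 : ∑ i ∈ Finset.range n, lamT (i + 1 + 1)
              ≤ ∑ i ∈ Finset.range n, muT (i + 1) := by
            have hA : ∑ i ∈ Finset.range n, lamT (i + 1 + 1)
                ≤ ∑ i ∈ Finset.range n, (1 + w / 2) * lam (i + 1 + 1) := by
              apply Finset.sum_le_sum
              intro i hi
              simp only [Finset.mem_range] at hi
              exact (hlamT (i + 1 + 1) (Finset.mem_Icc.mpr ⟨by omega, by omega⟩)).2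
            have hB : ∑ i ∈ Finset.range n, (1 - w / 2) * mu (i + 1)
                ≤ ∑ i ∈ Finset.range n, muT (i + 1) := by
              apply Finset.sum_le_sum
              intro i hi
              simp only [Finset.mem_range] at hi
              exact (hmuT (i + 1) (Finset.mem_Icc.mpr ⟨by omega, by omega⟩)).1
            have hcnd := hcond n hn (by omega)
            rw [icc_sum_eq_range, icc_sum_eq_range] at hcnd
            rw [Finset.sum_add_distrib, Finset.sum_sub_distrib] at hcnd
            rw [← Finset.mul_sum] at hA
            rw [← Finset.mul_sum] at hB
            nlinarith [hcnd, hA, hB]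
          calc ∑ i ∈ Finset.range n, lamT (i + 1 + 1) + lamT (0 + 1)
              ≤ ∑ i ∈ Finset.range n, muT (i + 1) + lamT (0 + 1) := by linarith
            _ = lamT 1 + ∑ i ∈ Finset.range n, muT (i + 1) := by
                norm_num; ring
        rw [hstep, max_eq_right hCle, hFn,
          Finset.sum_Icc_succ_top (by omega : 1 ≤ n + 1)]
        ring
  intro j hj
  simp only [Finset.mem_Icc] at hj
  exact key j hj.1 hj.2
end
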